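/- Let p be an odd prime and ℓ = (p−1)/2. Let C_p be the (p−1)×(p−1) integer matrix defined by: (C_p)_{i,j} = 2·((ij) mod p) − p for 1 ≤ i ≤ ℓ and 1 ≤ j ≤ p−1, where (ij) mod p denotes the least positive residue of ij modulo p; (C_p)_{i,j} = 1 if ℓ+1 ≤ i ≤ p−2 and j ∈ {i−ℓ, p−(i−ℓ)}, and 0 for other entries in rows ℓ+1,…,p−2; and (C_p)_{p−1,j} = 1 − ∑_{i=1}^{p−2} (C_p)_{i,j}, so that every column of C_p sums to 1. Then |det(C_p)| = 2^ℓ · |det(M_p)|, where M_p is the ℓ×ℓ integer matrix with entries (M_p)_{i,j} = 2·((ij) mod p) − p for 1 ≤ i, j ≤ ℓ. -/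

import Mathlib

open Finset

/-- The entries of the first `p−2` rows (1-indexed) of the change-of-variables matrix `C_p`:
for `1 ≤ i ≤ ℓ = (p−1)/2` the entry is `2·((i·j) mod p) − p`, and for `ℓ+1 ≤ i ≤ p−2`
the entry is `1` if `j ∈ {i−ℓ, p−(i−ℓ)}` and `0` otherwise. -/
def cTopEntry (p i j : ℕ) : ℤ :=
  if i ≤ (p - 1) / 2 then 2 * ((i * j) % p : ℕ) - p
  else if j = i - (p - 1) / 2 ∨ j = p - (i - (p - 1) / 2) then 1 else 0

/-- The `(p−1) × (p−1)` integer matrix `C_p`: its first `p−2` rows are given by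
`cTopEntry`, and its last row is chosen so that every column sums to `1`. -/
def cMatrix (p : ℕ) : Matrix (Fin (p - 1)) (Fin (p - 1)) ℤ := fun i j =>
  if (i : ℕ) + 1 ≤ p - 2 then cTopEntry p ((i : ℕ) + 1) ((j : ℕ) + 1)
  else 1 - ∑ i' ∈ Finset.Icc 1 (p - 2), cTopEntry p i' ((j : ℕ) + 1)

/-- The `ℓ × ℓ` integer matrix `M_p` with entries `2·((i·j) mod p) − p` (1-indexed). -/
def mMatrix (p : ℕ) : Matrix (Fin ((p - 1) / 2)) (Fin ((p - 1) / 2)) ℤ := fun i j =>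
  2 * ((((i : ℕ) + 1) * ((j : ℕ) + 1)) % p : ℕ) - p

section Aux

variable {p : ℕ}

lemma mod_pair (hp : p.Prime) (i j : ℕ) (hj : j ≤ p) (h : ¬ p ∣ i * j) :
    (i * j) % p + (i * (p - j)) % p = p := by
  have hp0 : 0 < p := hp.pos
  have h1 : i * (p - j) + i * j = i * p := by
    rw [← Nat.mul_add, Nat.sub_add_cancel hj]
  have h2 : (i * j % p + i * (p - j) % p) % p = 0 := by
    rw [Nat.add_mod, Nat.mod_mod_of_dvd, Nat.mod_mod_of_dvd] <;> try exact dvd_refl p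
    rw [← Nat.add_mod, Nat.add_comm, h1, Nat.mul_mod_left]
  have ha : i * j % p < p := Nat.mod_lt _ hp0
  have hb : i * (p - j) % p < p := Nat.mod_lt _ hp0
  have ha0 : i * j % p ≠ 0 := fun h' => h (Nat.dvd_of_mod_eq_zero h')
  have hb0 : i * (p - j) % p ≠ 0 := by
    intro h'
    have hd : p ∣ i * (p - j) := Nat.dvd_of_mod_eq_zero h'
    have : p ∣ i * j := (Nat.dvd_add_right hd).mp (h1 ▸ Dvd.intro i (mul_comm p i))
    exact h this
  obtain ⟨c, hc⟩ := Nat.dvd_of_mod_eq_zero h2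
  have hc2 : c < 2 := Nat.lt_of_mul_lt_mul_left (a := p) (by omega : p * c < p * 2)
  interval_cases c <;> omega

lemma not_dvd (hp : p.Prime) (i j : ℕ) (hi1 : 1 ≤ i) (hi : i ≤ p - 1)
    (hj1 : 1 ≤ j) (hj : j ≤ p - 1) : ¬ p ∣ i * j := by
  intro h
  rcases (Nat.Prime.dvd_mul hp).mp h with h' | h' <;>
    have := Nat.le_of_dvd (by omega) h' <;> omega

/-- For rows `1 ≤ i ≤ ℓ`, column `m` plus column `p−m` gives zero. -/
lemma pair_zero (hp : p.Prime) (i m : ℕ) (hi1 : 1 ≤ i) (hi : i ≤ (p - 1) / 2)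
    (hm1 : 1 ≤ m) (hm : m ≤ p - 1) :
    cTopEntry p i m + cTopEntry p i (p - m) = 0 := by
  have hp3 : 2 ≤ p := hp.two_le
  unfold cTopEntry
  rw [if_pos hi, if_pos hi]
  have := mod_pair hp i m (by omega) (not_dvd hp i m hi1 (by omega) hm1 hm)
  set a := (i * m) % p
  set b := (i * (p - m)) % p
  omega

/-- For middle rows `ℓ < i ≤ p−2` and columns `1 ≤ m ≤ ℓ`. -/
lemma pair_two (hP : p = 2 * ((p - 1) / 2) + 1) (i m : ℕ) (hi1 : (p - 1) / 2 < i)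
    (hi : i ≤ p - 2) (hm1 : 1 ≤ m) (hm : m ≤ (p - 1) / 2) :
    cTopEntry p i m + cTopEntry p i (p - m) =
      if i = (p - 1) / 2 + m then 2 else 0 := by
  have hni : ¬ i ≤ (p - 1) / 2 := by omega
  unfold cTopEntry
  simp only [if_neg hni]
  split_ifs <;> omega

lemma colsum (hp : p.Prime) (hP : p = 2 * ((p - 1) / 2) + 1) (h3 : 3 ≤ p)
    (m : ℕ) (hm1 : 1 ≤ m) (hm : m ≤ (p - 1) / 2) :
    ∑ i' ∈ Finset.Icc 1 (p - 2), (cTopEntry p i' m + cTopEntry p i' (p - m)) =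
      if m < (p - 1) / 2 then 2 else 0 := by
  have hIcc : Finset.Icc 1 (p - 2) = Finset.Ioc 0 (p - 2) := by
    rw [← Finset.Icc_add_one_left_eq_Ioc, zero_add]
  rw [hIcc, ← Finset.sum_Ioc_consecutive _ (by omega : 0 ≤ (p - 1) / 2)
    (by omega : (p - 1) / 2 ≤ p - 2)]
  have hz : ∑ i' ∈ Finset.Ioc 0 ((p - 1) / 2),
      (cTopEntry p i' m + cTopEntry p i' (p - m)) = 0 := by
    apply Finset.sum_eq_zero
    intro i' hi'
    rw [Finset.mem_Ioc] at hi'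
    exact pair_zero hp i' m hi'.1 hi'.2 hm1 (by omega)
  have hterm : ∀ i' ∈ Finset.Ioc ((p - 1) / 2) (p - 2),
      cTopEntry p i' m + cTopEntry p i' (p - m) =
        if i' = (p - 1) / 2 + m then (2 : ℤ) else 0 := by
    intro i' hi'
    rw [Finset.mem_Ioc] at hi'
    exact pair_two hP i' m hi'.1 hi'.2 hm1 hm
  have h2 : ∑ i' ∈ Finset.Ioc ((p - 1) / 2) (p - 2),
      (cTopEntry p i' m + cTopEntry p i' (p - m)) =
      if m < (p - 1) / 2 then 2 else 0 := by
    rw [Finset.sum_congr rfl hterm, Finset.sum_ite_eq']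
    simp only [Finset.mem_Ioc]
    split_ifs <;> omega
  rw [hz, h2, zero_add]

/-- The column-operation matrix: `T k j = δ_{kj} + [j+1 ≤ ℓ ∧ k+j+2 = p]`. -/
def Tmat (p : ℕ) : Matrix (Fin (p - 1)) (Fin (p - 1)) ℤ := fun k j =>
  if k = j then 1 else if (j : ℕ) + 1 ≤ (p - 1) / 2 ∧ (k : ℕ) + (j : ℕ) + 2 = p then 1 else 0

lemma det_Tmat (hP : p = 2 * ((p - 1) / 2) + 1) : (Tmat p).det = 1 := by
  rw [Matrix.det_of_lowerTriangular (Tmat p) ?_]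
  · simp [Tmat]
  · intro i j hij
    have hij' : (i : ℕ) < j := hij
    unfold Tmat
    rw [if_neg (by omega : ¬ i = j), if_neg (by omega)]

lemma Q_entry (hp : p.Prime) (hP : p = 2 * ((p - 1) / 2) + 1) (h3 : 3 ≤ p)
    (i j : Fin (p - 1)) :
    (cMatrix p * Tmat p) i j =
      cMatrix p i j + (if (j : ℕ) + 1 ≤ (p - 1) / 2
        then cMatrix p i ⟨p - 2 - (j : ℕ), by omega⟩ else 0) := by
  rw [Matrix.mul_apply]
  have key : ∀ k : Fin (p - 1), cMatrix p i k * Tmat p k j =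
      (if k = j then cMatrix p i j else 0) +
      (if k = (⟨p - 2 - (j : ℕ), by omega⟩ : Fin (p - 1)) then
        (if (j : ℕ) + 1 ≤ (p - 1) / 2
          then cMatrix p i ⟨p - 2 - (j : ℕ), by omega⟩ else 0) else 0) := by
    intro k
    unfold Tmat
    by_cases h1 : k = j
    · subst h1
      rw [if_pos rfl, mul_one, if_pos rfl]
      have hne : ¬ k = (⟨p - 2 - (k : ℕ), by omega⟩ : Fin (p - 1)) := by
        intro h'
        have := congrArg Fin.val h'
        simp only at this
        omega
      rw [if_neg hne, add_zero]
    · rw [if_neg h1, if_neg h1, zero_add]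
      by_cases h2 : (j : ℕ) + 1 ≤ (p - 1) / 2 ∧ (k : ℕ) + (j : ℕ) + 2 = p
      · have hk : k = (⟨p - 2 - (j : ℕ), by omega⟩ : Fin (p - 1)) := by
          apply Fin.ext
          simp only
          omega
        rw [if_pos h2, mul_one, if_pos hk, if_pos h2.1, hk]
      · rw [if_neg h2, mul_zero]
        by_cases hk : k = (⟨p - 2 - (j : ℕ), by omega⟩ : Fin (p - 1))
        · rw [if_pos hk, if_neg ?_]
          intro hj2
          apply h2
          refine ⟨hj2, ?_⟩
          have := congrArg Fin.val hk
          simp only at this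
          have hjlt : (j : ℕ) < p - 1 := j.isLt
          omega
        · rw [if_neg hk]
  rw [Finset.sum_congr rfl (fun k _ => key k), Finset.sum_add_distrib,
    Finset.sum_ite_eq', Finset.sum_ite_eq', if_pos (Finset.mem_univ _),
    if_pos (Finset.mem_univ _)]


lemma Q1 (hp : p.Prime) (hP : p = 2 * ((p - 1) / 2) + 1) (h3 : 3 ≤ p)
    (i j : Fin (p - 1)) (hi : (i : ℕ) + 1 ≤ (p - 1) / 2) (hj : (j : ℕ) + 1 ≤ (p - 1) / 2) :
    (cMatrix p * Tmat p) i j = 0 := by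
  rw [Q_entry hp hP h3, if_pos hj]
  have e1 : cMatrix p i j = cTopEntry p ((i : ℕ) + 1) ((j : ℕ) + 1) := by
    rw [cMatrix, if_pos (by omega)]
  have e2 : cMatrix p i ⟨p - 2 - (j : ℕ), by omega⟩ =
      cTopEntry p ((i : ℕ) + 1) (p - ((j : ℕ) + 1)) := by
    rw [cMatrix]
    simp only
    rw [if_pos (by omega)]
    congr 1
    omega
  rw [e1, e2, pair_zero hp ((i : ℕ) + 1) ((j : ℕ) + 1) (by omega) hi (by omega) (by omega)]

lemma Q2 (hp : p.Prime) (hP : p = 2 * ((p - 1) / 2) + 1) (h3 : 3 ≤ p)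
    (i j : Fin (p - 1)) (hi : (p - 1) / 2 ≤ (i : ℕ)) (hj : (j : ℕ) + 1 ≤ (p - 1) / 2) :
    (cMatrix p * Tmat p) i j = if (i : ℕ) = (p - 1) / 2 + (j : ℕ) then 2 else 0 := by
  have hilt : (i : ℕ) < p - 1 := i.isLt
  rw [Q_entry hp hP h3, if_pos hj]
  by_cases hA : (i : ℕ) + 1 ≤ p - 2
  · have e1 : cMatrix p i j = cTopEntry p ((i : ℕ) + 1) ((j : ℕ) + 1) := by
      rw [cMatrix, if_pos hA]
    have e2 : cMatrix p i ⟨p - 2 - (j : ℕ), by omega⟩ =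
        cTopEntry p ((i : ℕ) + 1) (p - ((j : ℕ) + 1)) := by
      rw [cMatrix]
      simp only
      rw [if_pos hA]
      congr 1
      omega
    rw [e1, e2, pair_two hP ((i : ℕ) + 1) ((j : ℕ) + 1) (by omega) hA (by omega) hj]
    split_ifs <;> omega
  · have e1 : cMatrix p i j =
        1 - ∑ i' ∈ Finset.Icc 1 (p - 2), cTopEntry p i' ((j : ℕ) + 1) := by
      rw [cMatrix, if_neg hA]
    have e2 : cMatrix p i ⟨p - 2 - (j : ℕ), by omega⟩ =
        1 - ∑ i' ∈ Finset.Icc 1 (p - 2), cTopEntry p i' (p - ((j : ℕ) + 1)) := by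
      rw [cMatrix]
      simp only
      rw [if_neg hA]
      congr 2
      funext i'
      congr 1
      omega
    rw [e1, e2]
    have hsum := colsum hp hP h3 ((j : ℕ) + 1) (by omega) hj
    rw [Finset.sum_add_distrib] at hsum
    split_ifs at hsum ⊢ <;> omega
  
lemma Q3 (hp : p.Prime) (hP : p = 2 * ((p - 1) / 2) + 1) (h3 : 3 ≤ p)
    (i j : Fin (p - 1)) (hi : (i : ℕ) + 1 ≤ (p - 1) / 2) (hj : (p - 1) / 2 ≤ (j : ℕ)) :
    (cMatrix p * Tmat p) i j =
      -(2 * ((((i : ℕ) + 1) * (p - 1 - (j : ℕ))) % p : ℕ) - (p : ℤ)) := by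
  have hjlt : (j : ℕ) < p - 1 := j.isLt
  rw [Q_entry hp hP h3, if_neg (by omega), add_zero, cMatrix, if_pos (by omega),
    cTopEntry, if_pos hi]
  have hmp := mod_pair hp ((i : ℕ) + 1) ((j : ℕ) + 1) (by omega)
    (not_dvd hp _ _ (by omega) (by omega) (by omega) (by omega))
  have harg : p - ((j : ℕ) + 1) = p - 1 - (j : ℕ) := by omega
  rw [harg] at hmp
  set a := (((i : ℕ) + 1) * ((j : ℕ) + 1)) % p
  set b := (((i : ℕ) + 1) * (p - 1 - (j : ℕ))) % p
  omega

end Aux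

/-- `|det C_p| = 2^ℓ · |det M_p|` for `p` an odd prime and `ℓ = (p−1)/2`. -/
theorem det_cMatrix_eq_pow_two_mul_det_mMatrix
    (p : ℕ) (hp : p.Prime) (hodd : Odd p) :
    |(cMatrix p).det| = 2 ^ ((p - 1) / 2) * |(mMatrix p).det| := by
  obtain ⟨k, hk⟩ := hodd
  have h3 : 3 ≤ p := by
    have h2 := hp.two_le
    omega
  have hP : p = 2 * ((p - 1) / 2) + 1 := by omega
  set ℓ := (p - 1) / 2 with hldef
  have hnn : ℓ + ℓ = p - 1 := by omega
  set e : Fin ℓ ⊕ Fin ℓ ≃ Fin (p - 1) := finSumFinEquiv.trans (finCongr hnn) with hedef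
  have he1 : ∀ a : Fin ℓ, ((e (Sum.inl a)) : ℕ) = (a : ℕ) := by
    intro a; simp [hedef]
  have he2 : ∀ b : Fin ℓ, ((e (Sum.inr b)) : ℕ) = ℓ + (b : ℕ) := by
    intro b; simp [hedef]; omega
  set B : Matrix (Fin ℓ) (Fin ℓ) ℤ := -((mMatrix p).submatrix id Fin.rev) with hBdef
  set D : Matrix (Fin ℓ) (Fin ℓ) ℤ :=
    Matrix.of (fun b b' => (cMatrix p * Tmat p) (e (Sum.inr b)) (e (Sum.inr b'))) with hDdef
  have hblock : (cMatrix p * Tmat p).submatrix e e =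
      Matrix.fromBlocks 0 B ((2 : ℤ) • 1) D := by
    ext i j
    rcases i with a | b <;> rcases j with a' | b'
    · simp only [Matrix.submatrix_apply, Matrix.fromBlocks_apply₁₁, Matrix.zero_apply]
      exact Q1 hp hP h3 _ _ (by rw [he1]; omega) (by rw [he1]; omega)
    · simp only [Matrix.submatrix_apply, Matrix.fromBlocks_apply₁₂]
      rw [Q3 hp hP h3 _ _ (by rw [he1]; omega) (by rw [he2]; omega)]
      rw [hBdef]
      simp only [Matrix.neg_apply, Matrix.submatrix_apply, id_eq, mMatrix]
      have harg : (((e (Sum.inl a)) : ℕ) + 1) * (p - 1 - ((e (Sum.inr b')) : ℕ))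
          = ((a : ℕ) + 1) * (((Fin.rev b') : ℕ) + 1) := by
        rw [he1, he2, Fin.val_rev]
        congr 1
        omega
      rw [harg]
    · simp only [Matrix.submatrix_apply, Matrix.fromBlocks_apply₂₁, Matrix.smul_apply,
        Matrix.one_apply]
      rw [Q2 hp hP h3 _ _ (by rw [he2]; omega) (by rw [he1]; omega), he1, he2]
      have hba : ℓ + (b : ℕ) = ℓ + (a' : ℕ) ↔ b = a' := by
        constructor
        · intro h; exact Fin.ext (by omega)
        · intro h; rw [h]
      split_ifs with h1 h2 h2
      · simp
      · exact absurd (hba.mp h1) h2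
      · exact absurd (hba.mpr h2) h1
      · simp
    · rfl
  have hdetT : (Tmat p).det = 1 := det_Tmat hP
  have hQdet : |(cMatrix p).det| = |(Matrix.fromBlocks 0 B ((2 : ℤ) • 1) D).det| := by
    rw [← hblock, Matrix.det_submatrix_equiv_self, Matrix.det_mul, hdetT, mul_one]
  rw [hQdet]
  have hswap : Matrix.fromBlocks 0 B ((2 : ℤ) • 1) D =
      (Matrix.fromBlocks B 0 D ((2 : ℤ) • 1)).submatrix id (Equiv.sumComm (Fin ℓ) (Fin ℓ)) := by
    ext i j
    rcases i with a | b <;> rcases j with a' | b' <;> rfl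
  rw [hswap, Matrix.det_permute', Matrix.det_fromBlocks_zero₁₂]
  have hdet2 : ((2 : ℤ) • (1 : Matrix (Fin ℓ) (Fin ℓ) ℤ)).det = 2 ^ ℓ := by
    rw [Matrix.det_smul, Matrix.det_one, mul_one, Fintype.card_fin]
  have hdetB : |B.det| = |(mMatrix p).det| := by
    rw [hBdef]
    have : ((mMatrix p).submatrix id Fin.rev) = (mMatrix p).submatrix id ⇑(Fin.revPerm (n := ℓ)) := rfl
    rw [Matrix.det_neg, this, Matrix.det_permute', Fintype.card_fin]
    rw [abs_mul, abs_mul, abs_pow, abs_neg, abs_one, one_pow, one_mul]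
    rcases Int.units_eq_one_or (Equiv.Perm.sign (Fin.revPerm (n := ℓ))) with h | h <;> simp [h]
  rw [abs_mul, abs_mul, hdetB, hdet2]
  have habs1 : |((Equiv.Perm.sign (Equiv.sumComm (Fin ℓ) (Fin ℓ)) : ℤˣ) : ℤ)| = 1 := by
    rcases Int.units_eq_one_or (Equiv.Perm.sign (Equiv.sumComm (Fin ℓ) (Fin ℓ))) with h | h <;>
      rw [h] <;> norm_num
  simp only [Int.cast_id] at *
  rw [habs1, one_mul, abs_pow]
  norm_num
  ring
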